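/- arXiv:1207.6592 — 5 statements merged into one kernel-verified Lean document; each statement's English description precedes it below -/
import Mathlib

section
/- Suppose a, b, c : (0, t₀) → ℝ are differentiable, positive, and satisfy the system ȧ = -(b² + c² - a²)/(2bc), ḃ = -(a² + c² - b²)/(2ac), ċ = -(a² + b² - c²)/(2ab) + 6ab. Then the function R = a/b satisfies c · (d/dt)(a/b) = (a/b)² - 1. -/
open Set

/-- If a, b, c solve the KE system on (0, t₀), then R = a/b satisfies
c · (a/b)' = (a/b)² - 1. -/
theorem stmt6 (t₀ : ℝ) (a b c : ℝ → ℝ)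
    (hpos : ∀ t ∈ Ioo 0 t₀, 0 < a t ∧ 0 < b t ∧ 0 < c t)
    (ha : ∀ t ∈ Ioo 0 t₀,
      HasDerivAt a (-(b t ^ 2 + c t ^ 2 - a t ^ 2) / (2 * b t * c t)) t)
    (hb : ∀ t ∈ Ioo 0 t₀,
      HasDerivAt b (-(a t ^ 2 + c t ^ 2 - b t ^ 2) / (2 * a t * c t)) t)
    (hc : ∀ t ∈ Ioo 0 t₀,
      HasDerivAt c (-(a t ^ 2 + b t ^ 2 - c t ^ 2) / (2 * a t * b t) + 6 * a t * b t) t) :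
    ∀ t ∈ Ioo 0 t₀,
      HasDerivAt (fun s => a s / b s) (((a t / b t) ^ 2 - 1) / c t) t := by
  intro t ht
  obtain ⟨hA, hB, hC⟩ := hpos t ht
  have h : HasDerivAt (fun s => a s / b s) _ t := (ha t ht).div (hb t ht) hB.ne'
  convert h using 1
  field_simp
  ring
end

section
/- The function f(r) = -(1/3)·tanh(r) satisfies (f·f')'/(f·f') = 12f + 2coth(2r) for all r < 0, with f(0) = 0, f'(0) = -1/3, and f(r) → 1/3 as r → -∞. -/
open Set Filter

lemma tanh_hasDerivAt (x : ℝ) :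
    HasDerivAt Real.tanh (1 / Real.cosh x ^ 2) x := by
  have h : HasDerivAt (fun y => Real.sinh y / Real.cosh y)
      ((Real.cosh x * Real.cosh x - Real.sinh x * Real.sinh x) / Real.cosh x ^ 2) x :=
    (Real.hasDerivAt_sinh x).div (Real.hasDerivAt_cosh x) (Real.cosh_pos x).ne'
  have hfun : Real.tanh = fun y => Real.sinh y / Real.cosh y := by
    funext y; exact Real.tanh_eq_sinh_div_cosh y
  rw [hfun]
  have h1 : Real.cosh x * Real.cosh x - Real.sinh x * Real.sinh x = 1 := by
    have := Real.cosh_sq_sub_sinh_sq x; nlinarith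
  rw [h1] at h
  exact h

/-- f(r) = -(1/3)tanh(r) satisfies (f f')'/(f f') = 12 f + 2 coth(2r) for r < 0,
with f(0) = 0, f'(0) = -1/3 and f(r) → 1/3 as r → -∞. -/
theorem stmt10 (f : ℝ → ℝ) (hf : ∀ r, f r = -(1 / 3) * Real.tanh r) :
    (∀ r < (0 : ℝ),
      HasDerivAt (fun s => Real.log (f s * deriv f s))
        (12 * f r + 2 * (Real.cosh (2 * r) / Real.sinh (2 * r))) r) ∧
    f 0 = 0 ∧ deriv f 0 = -(1 / 3) ∧
    Tendsto f atBot (nhds (1 / 3)) := by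
  have hfe : f = fun r => -(1 / 3) * Real.tanh r := funext hf
  have hd : ∀ x : ℝ, HasDerivAt f (-(1 / 3) * (1 / Real.cosh x ^ 2)) x := by
    intro x; rw [hfe]; exact (tanh_hasDerivAt x).const_mul _
  have hderiv : deriv f = fun x => -(1 / 3) * (1 / Real.cosh x ^ 2) := by
    funext x; exact (hd x).deriv
  refine ⟨?_, ?_, ?_, ?_⟩
  · intro r hr
    have hc := Real.cosh_pos r
    have hcne : Real.cosh r ≠ 0 := hc.ne'
    have hs : Real.sinh r < 0 := by
      rwa [show (0:ℝ) = Real.sinh 0 by simp, Real.sinh_lt_sinh]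
    have hsne : Real.sinh r ≠ 0 := hs.ne
    -- the inner function
    have hgfun : ∀ s, f s * deriv f s
        = (1 / 9) * (Real.sinh s / Real.cosh s ^ 3) := by
      intro s
      rw [hderiv]
      simp only
      rw [hf s, Real.tanh_eq_sinh_div_cosh]
      have := (Real.cosh_pos s).ne'
      field_simp
      ring
    have hg : HasDerivAt (fun s => (1 / 9) * (Real.sinh s / Real.cosh s ^ 3))
        ((1 / 9) * ((Real.cosh r * Real.cosh r ^ 3
          - Real.sinh r * (3 * Real.cosh r ^ 2 * Real.sinh r)) / (Real.cosh r ^ 3) ^ 2)) r := by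
      exact (((Real.hasDerivAt_sinh r).div
        ((Real.hasDerivAt_cosh r).pow 3) (pow_pos hc 3).ne').const_mul _)
    have hgne : (1 / 9 : ℝ) * (Real.sinh r / Real.cosh r ^ 3) ≠ 0 := by
      have : Real.sinh r / Real.cosh r ^ 3 < 0 := div_neg_of_neg_of_pos hs (by positivity)
      positivity
    have hlog := hg.log hgne
    simp only [hgfun]
    convert hlog using 1
    rw [hf r, Real.tanh_eq_sinh_div_cosh, Real.cosh_two_mul, Real.sinh_two_mul]
    have hsq : Real.cosh r ^ 2 = Real.sinh r ^ 2 + 1 := Real.cosh_sq r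
    field_simp
    nlinarith [hsq, sq_nonneg (Real.sinh r), Real.cosh_pos r]
  · rw [hf 0]; simp
  · rw [hderiv]; simp
  · rw [hfe]
    have hlim : Tendsto (fun r : ℝ => Real.tanh r) atBot (nhds (-1)) := by
      have h2r : Tendsto (fun r : ℝ => 2 * r) atBot atBot :=
        tendsto_id.const_mul_atBot two_pos
      have he : Tendsto (fun r : ℝ => Real.exp (2 * r)) atBot (nhds 0) :=
        Real.tendsto_exp_atBot.comp h2r
      have heq : (fun r : ℝ => Real.tanh r)
          = fun r => (Real.exp (2 * r) - 1) / (Real.exp (2 * r) + 1) := by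
        funext r
        rw [Real.tanh_eq_sinh_div_cosh, Real.sinh_eq, Real.cosh_eq]
        have h1 : Real.exp (2 * r) = Real.exp r * Real.exp r := by
          rw [← Real.exp_add]; ring_nf
        have h2 : Real.exp r ≠ 0 := Real.exp_ne_zero r
        have h3 : Real.exp (-r) = (Real.exp r)⁻¹ := Real.exp_neg r
        rw [h1, h3]
        have h4 : Real.exp r * Real.exp r + 1 ≠ 0 := by positivity
        field_simp
      rw [heq]
      have := (he.sub (tendsto_const_nhds (x := (1:ℝ)))).div
        (he.add (tendsto_const_nhds (x := (1:ℝ)))) (by norm_num)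
      simpa [Pi.div_def] using this
    have := hlim.const_mul (-(1/3 : ℝ))
    simpa using this
end

section
/- The functions a(t) = (1/√3)cos(√3 t), b(t) = 1/√3, c(t) = (1/√3)sin(√3 t) satisfy the system ȧ = -(b²+c²-a²)/(2bc), ḃ = -(a²+c²-b²)/(2ac), ċ = -(a²+b²-c²)/(2ab) + 6ab for all t ∈ (0, π/(2√3)). -/
open Set Real

/-- a(t) = (1/√3)cos(√3 t), b(t) = 1/√3, c(t) = (1/√3)sin(√3 t) satisfy the KE ODE
system on (0, π/(2√3)). -/
theorem stmt13 (a b c : ℝ → ℝ)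
    (ha : ∀ t, a t = (1 / Real.sqrt 3) * Real.cos (Real.sqrt 3 * t))
    (hb : ∀ t, b t = 1 / Real.sqrt 3)
    (hc : ∀ t, c t = (1 / Real.sqrt 3) * Real.sin (Real.sqrt 3 * t)) :
    ∀ t ∈ Ioo 0 (π / (2 * Real.sqrt 3)),
      HasDerivAt a (-(b t ^ 2 + c t ^ 2 - a t ^ 2) / (2 * b t * c t)) t ∧
      HasDerivAt b (-(a t ^ 2 + c t ^ 2 - b t ^ 2) / (2 * a t * c t)) t ∧
      HasDerivAt c (-(a t ^ 2 + b t ^ 2 - c t ^ 2) / (2 * a t * b t) + 6 * a t * b t) t := by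
  intro t ht
  obtain ⟨ht0, htπ⟩ := ht
  have hs : (0:ℝ) < Real.sqrt 3 := Real.sqrt_pos.mpr (by norm_num)
  have hs2 : Real.sqrt 3 ^ 2 = 3 := Real.sq_sqrt (by norm_num)
  have hsne : Real.sqrt 3 ≠ 0 := ne_of_gt hs
  have hst0 : 0 < Real.sqrt 3 * t := mul_pos hs ht0
  have hstπ : Real.sqrt 3 * t < π / 2 := by
    have := (lt_div_iff₀ (by positivity : (0:ℝ) < 2 * Real.sqrt 3)).mp htπ
    nlinarith
  have hsin : 0 < Real.sin (Real.sqrt 3 * t) :=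
    Real.sin_pos_of_pos_of_lt_pi hst0 (lt_trans hstπ (by linarith [Real.pi_pos]))
  have hcos : 0 < Real.cos (Real.sqrt 3 * t) :=
    Real.cos_pos_of_mem_Ioo ⟨by linarith, hstπ⟩
  have hea : a = fun t => (1 / Real.sqrt 3) * Real.cos (Real.sqrt 3 * t) := funext ha
  have heb : b = fun _ => 1 / Real.sqrt 3 := funext hb
  have hec : c = fun t => (1 / Real.sqrt 3) * Real.sin (Real.sqrt 3 * t) := funext hc
  have hda : HasDerivAt a ((-Real.sin (Real.sqrt 3 * t) * Real.sqrt 3) * (1 / Real.sqrt 3)) t := by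
    rw [hea]
    exact (((hasDerivAt_id t).const_mul (Real.sqrt 3)).cos).const_mul (1 / Real.sqrt 3)
      |>.congr_deriv (by field_simp; rfl)
  have hdb : HasDerivAt b 0 t := by rw [heb]; exact hasDerivAt_const t _
  have hdc : HasDerivAt c ((Real.cos (Real.sqrt 3 * t) * Real.sqrt 3) * (1 / Real.sqrt 3)) t := by
    rw [hec]
    exact (((hasDerivAt_id t).const_mul (Real.sqrt 3)).sin).const_mul (1 / Real.sqrt 3)
      |>.congr_deriv (by field_simp; rfl)
  have hpy : Real.sin (Real.sqrt 3 * t) ^ 2 + Real.cos (Real.sqrt 3 * t) ^ 2 = 1 :=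
    Real.sin_sq_add_cos_sq _
  refine ⟨?_, ?_, ?_⟩
  · convert hda using 1
    rw [ha, hb, hc]
    field_simp
    nlinarith [hsin.ne', hcos.ne']
  · convert hdb using 1
    rw [ha, hb, hc]
    field_simp
    try nlinarith
  · convert hdc using 1
    rw [ha, hb, hc]
    field_simp
    nlinarith [hsin.ne', hcos.ne']
end

section
/- Suppose a, b, c solve the system ȧ = -(b²+c²-a²)/(2bc), ḃ = -(a²+c²-b²)/(2ac), ċ = -(a²+b²-c²)/(2ab)+6ab on (0, t*), extend continuously differentiably to t*, with a(t*) = 0, b(t*) = c(t*) > 0, and a > 0, b > 0, c > 0 on (0,t*). Then ȧ(t*) = -1 and ḃ(t*) = ċ(t*) = 0. -/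
open Set Filter Topology

/-- Boundary behaviour at t = t*: if a, b, c solve the KE system on (0,t*), are C¹ up to
t* with a(t*) = 0, b(t*) = c(t*) > 0, and a, b, c > 0 on (0,t*), then
ȧ(t*) = -1 and ḃ(t*) = ċ(t*) = 0. -/
theorem stmt14 (T : ℝ) (hT : 0 < T) (a b c da db dc : ℝ → ℝ)
    (hpos : ∀ t ∈ Ioo 0 T, 0 < a t ∧ 0 < b t ∧ 0 < c t)
    (ha : ∀ t ∈ Ioo 0 T, HasDerivAt a (da t) t)
    (hb : ∀ t ∈ Ioo 0 T, HasDerivAt b (db t) t)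
    (hc : ∀ t ∈ Ioo 0 T, HasDerivAt c (dc t) t)
    (hda : ∀ t ∈ Ioo 0 T, da t = -(b t ^ 2 + c t ^ 2 - a t ^ 2) / (2 * b t * c t))
    (hdb : ∀ t ∈ Ioo 0 T, db t = -(a t ^ 2 + c t ^ 2 - b t ^ 2) / (2 * a t * c t))
    (hdc : ∀ t ∈ Ioo 0 T,
      dc t = -(a t ^ 2 + b t ^ 2 - c t ^ 2) / (2 * a t * b t) + 6 * a t * b t)
    -- C¹ extension to t = T: the functions and their derivatives are continuous from the
    -- left at T, with one-sided derivatives given by da, db, dc at T: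
    (haT : HasDerivWithinAt a (da T) (Iic T) T)
    (hbT : HasDerivWithinAt b (db T) (Iic T) T)
    (hcT : HasDerivWithinAt c (dc T) (Iic T) T)
    (hdaT : Tendsto da (nhdsWithin T (Iio T)) (nhds (da T)))
    (hdbT : Tendsto db (nhdsWithin T (Iio T)) (nhds (db T)))
    (hdcT : Tendsto dc (nhdsWithin T (Iio T)) (nhds (dc T)))
    (haT0 : a T = 0) (hbcT : b T = c T) (hbTpos : 0 < b T) :
    da T = -1 ∧ db T = 0 ∧ dc T = 0 := by
  have hcTpos : 0 < c T := hbcT ▸ hbTpos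
  have hbT' : b T ≠ 0 := ne_of_gt hbTpos
  have hcT' : c T ≠ 0 := ne_of_gt hcTpos
  have hmem : ∀ᶠ t in 𝓝[<] T, t ∈ Ioo 0 T :=
    Ioo_mem_nhdsLT_of_mem ⟨hT, le_refl T⟩
  have hmono : 𝓝[<] T ≤ 𝓝[Iic T] T := nhdsWithin_mono T Iio_subset_Iic_self
  have hca : Tendsto a (𝓝[<] T) (𝓝 (a T)) := haT.continuousWithinAt.mono_left hmono
  have hcb : Tendsto b (𝓝[<] T) (𝓝 (b T)) := hbT.continuousWithinAt.mono_left hmono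
  have hcc : Tendsto c (𝓝[<] T) (𝓝 (c T)) := hcT.continuousWithinAt.mono_left hmono
  -- da T = -1
  have hden : Tendsto (fun t => 2 * b t * c t) (𝓝[<] T) (𝓝 (2 * b T * c T)) :=
    (tendsto_const_nhds.mul hcb).mul hcc
  have hden' : 2 * b T * c T ≠ 0 := by positivity
  have hlim1 : Tendsto (fun t => -(b t ^ 2 + c t ^ 2 - a t ^ 2) / (2 * b t * c t))
      (𝓝[<] T) (𝓝 (-(b T ^ 2 + c T ^ 2 - a T ^ 2) / (2 * b T * c T))) :=
    Tendsto.div (((hcb.pow 2).add (hcc.pow 2)).sub (hca.pow 2)).neg hden hden'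
  have hdaTval : da T = -(b T ^ 2 + c T ^ 2 - a T ^ 2) / (2 * b T * c T) :=
    tendsto_nhds_unique hdaT (hlim1.congr' (hmem.mono fun t ht => (hda t ht).symm))
  have hdaT1 : da T = -1 := by
    rw [hdaTval, haT0, hbcT]
    field_simp
    ring
  -- L'Hôpital for (c - b)/a
  have hdaT' : Tendsto da (𝓝[<] T) (𝓝 (-1)) := hdaT1 ▸ hdaT
  have hq : Tendsto (fun t => (c t - b t) / a t) (𝓝[<] T)
      (𝓝 ((dc T - db T) / (-1))) := by
    apply HasDerivAt.lhopital_zero_nhdsLT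
      (f' := fun t => dc t - db t) (g' := da)
    · exact hmem.mono fun t ht => (hc t ht).sub (hb t ht)
    · exact hmem.mono fun t ht => ha t ht
    · exact hdaT'.eventually_ne (by norm_num)
    · have := hcc.sub hcb
      rwa [hbcT, sub_self] at this
    · rwa [haT0] at hca
    · exact (hdcT.sub hdbT).div hdaT' (by norm_num)
  set L : ℝ := (dc T - db T) / (-1) with hL
  -- db T
  have hdbEq : db T = -(a T / (2 * c T)) - L * ((c T + b T) / (2 * c T)) := by
    refine tendsto_nhds_unique hdbT ?_
    have hlim : Tendsto (fun t => -(a t / (2 * c t)) - ((c t - b t) / a t) * ((c t + b t) / (2 * c t)))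
        (𝓝[<] T) (𝓝 (-(a T / (2 * c T)) - L * ((c T + b T) / (2 * c T)))) := by
      have h2c : Tendsto (fun t => 2 * c t) (𝓝[<] T) (𝓝 (2 * c T)) := tendsto_const_nhds.mul hcc
      have h2c' : (2 : ℝ) * c T ≠ 0 := by positivity
      exact ((hca.div h2c h2c').neg).sub (hq.mul ((hcc.add hcb).div h2c h2c'))
    refine hlim.congr' (hmem.mono fun t ht => ?_)
    obtain ⟨hat, hbt, hct⟩ := hpos t ht
    rw [hdb t ht]
    field_simp
    ring
  -- dc T
  have hdcEq : dc T = -(a T / (2 * b T)) + L * ((c T + b T) / (2 * b T)) + 6 * a T * b T := by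
    refine tendsto_nhds_unique hdcT ?_
    have hlim : Tendsto (fun t => -(a t / (2 * b t)) + ((c t - b t) / a t) * ((c t + b t) / (2 * b t)) + 6 * a t * b t)
        (𝓝[<] T) (𝓝 (-(a T / (2 * b T)) + L * ((c T + b T) / (2 * b T)) + 6 * a T * b T)) := by
      have h2b : Tendsto (fun t => 2 * b t) (𝓝[<] T) (𝓝 (2 * b T)) := tendsto_const_nhds.mul hcb
      have h2b' : (2 : ℝ) * b T ≠ 0 := by positivity
      exact (((hca.div h2b h2b').neg).add (hq.mul ((hcc.add hcb).div h2b h2b'))).add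
        ((tendsto_const_nhds.mul hca).mul hcb)
    refine hlim.congr' (hmem.mono fun t ht => ?_)
    obtain ⟨hat, hbt, hct⟩ := hpos t ht
    rw [hdc t ht]
    field_simp
    ring
  rw [haT0, hbcT] at hdbEq hdcEq
  rw [hL] at hdbEq hdcEq
  have hcc2 : (c T + c T) / (2 * c T) = 1 := by
    field_simp
    ring
  rw [hcc2] at hdbEq hdcEq
  norm_num at hdbEq hdcEq
  refine ⟨hdaT1, by linarith, by linarith⟩
end

section
/- If a, b, c satisfy the system ȧ = -(b²+c²-a²)/(2bc), ḃ = -(a²+c²-b²)/(2ac), ċ = -(a²+b²-c²)/(2ab)+6ab with a = b = α > 0 (constant value at a boundary point) and ċ = 2β at a point where c = 0 (interpreted as the limit), and the limit of ċ as t → 0⁺ with a(t),b(t) → α, c(t)/t → 2β exists, then α² = (1 + 2β)/6. More concretely: if a(t) = α + O(t), b(t) = α + O(t), c(t) = 2βt + O(t²) solve the system near t = 0 with the third equation holding in the limit t → 0⁺, then α² = (1+2β)/6. -/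
open Set Filter

/-- Boundary behaviour at t = 0: if a(t) → α, b(t) → α, c(t)/t → 2β and ċ(t) → 2β as
t → 0⁺, for a positive solution (a,b,c) of the KE system on (0,ε), then
α² = (1 + 2β)/6. -/
theorem stmt15 (α β ε : ℝ) (hα : 0 < α) (hβ : 0 < β) (hε : 0 < ε)
    (a b c da db dc : ℝ → ℝ)
    (hpos : ∀ t ∈ Ioo 0 ε, 0 < a t ∧ 0 < b t ∧ 0 < c t)
    (ha : ∀ t ∈ Ioo 0 ε, HasDerivAt a (da t) t)
    (hb : ∀ t ∈ Ioo 0 ε, HasDerivAt b (db t) t)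
    (hc : ∀ t ∈ Ioo 0 ε, HasDerivAt c (dc t) t)
    (hda : ∀ t ∈ Ioo 0 ε, da t = -(b t ^ 2 + c t ^ 2 - a t ^ 2) / (2 * b t * c t))
    (hdb : ∀ t ∈ Ioo 0 ε, db t = -(a t ^ 2 + c t ^ 2 - b t ^ 2) / (2 * a t * c t))
    (hdc : ∀ t ∈ Ioo 0 ε,
      dc t = -(a t ^ 2 + b t ^ 2 - c t ^ 2) / (2 * a t * b t) + 6 * a t * b t)
    (haLim : Tendsto a (nhdsWithin 0 (Ioi 0)) (nhds α))
    (hbLim : Tendsto b (nhdsWithin 0 (Ioi 0)) (nhds α))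
    (hcLim : Tendsto (fun t => c t / t) (nhdsWithin 0 (Ioi 0)) (nhds (2 * β)))
    (hdcLim : Tendsto dc (nhdsWithin 0 (Ioi 0)) (nhds (2 * β))) :
    α ^ 2 = (1 + 2 * β) / 6 := by
  have hcLim0 : Tendsto c (nhdsWithin 0 (Ioi 0)) (nhds 0) := by
    have hid : Tendsto (fun t : ℝ => t) (nhdsWithin 0 (Ioi 0)) (nhds 0) :=
      tendsto_id.mono_left nhdsWithin_le_nhds
    have := hcLim.mul hid
    rw [mul_zero] at this
    refine this.congr' ?_
    filter_upwards [self_mem_nhdsWithin] with t ht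
    have ht' : (t : ℝ) ≠ 0 := ne_of_gt ht
    field_simp
  have hfLim : Tendsto (fun t => -(a t ^ 2 + b t ^ 2 - c t ^ 2) / (2 * a t * b t)
      + 6 * a t * b t) (nhdsWithin 0 (Ioi 0))
      (nhds (-(α ^ 2 + α ^ 2 - 0 ^ 2) / (2 * α * α) + 6 * α * α)) := by
    have h1 : Tendsto (fun t => -(a t ^ 2 + b t ^ 2 - c t ^ 2)) (nhdsWithin 0 (Ioi 0))
        (nhds (-(α ^ 2 + α ^ 2 - 0 ^ 2))) := by
      exact (((haLim.pow 2).add (hbLim.pow 2)).sub (hcLim0.pow 2)).neg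
    have h2 : Tendsto (fun t => 2 * a t * b t) (nhdsWithin 0 (Ioi 0))
        (nhds (2 * α * α)) := ((tendsto_const_nhds.mul haLim).mul hbLim)
    have hne : (2 : ℝ) * α * α ≠ 0 := by positivity
    exact (h1.div h2 hne).add ((tendsto_const_nhds.mul haLim).mul hbLim)
  have heq : dc =ᶠ[nhdsWithin 0 (Ioi 0)] fun t =>
      -(a t ^ 2 + b t ^ 2 - c t ^ 2) / (2 * a t * b t) + 6 * a t * b t := by
    have hmem : Ioo (0:ℝ) ε ∈ nhdsWithin 0 (Ioi 0) := by
      rw [mem_nhdsWithin]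
      exact ⟨Iio ε, isOpen_Iio, hε, fun x hx => ⟨hx.2, hx.1⟩⟩
    filter_upwards [hmem] with t ht
    exact hdc t ht
  have := tendsto_nhds_unique (hdcLim.congr' heq) hfLim
  have hne : (2 : ℝ) * α * α ≠ 0 := by positivity
  have hval : -(α ^ 2 + α ^ 2 - 0 ^ 2) / (2 * α * α) + 6 * α * α = 6 * α ^ 2 - 1 := by
    field_simp
    ring
  rw [hval] at this
  linarith
end
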